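/- Let δ ∈ (0, π), λ ∈ (0, π) with δ ≠ λ, and let f be a given nonzero real number. Then the equation sin δ′ − sin λ − f · sin(δ′ − λ) = 0 has exactly one solution δ′ ∈ (0, π) with δ′ ≠ λ, for generic f (precisely: the equation, viewed in the half-angle tangent d = tan(δ′/2), is a quadratic with root d = tan(λ/2) corresponding to the excluded case δ′ = λ, leaving exactly one further root). -/

import Mathlib

open Real

/-- Recovery of the isogram parameter `δ′` from the transmission ratio `f`: the equation
`sin δ′ − sin λ − f·sin(δ′ − λ) = 0`, viewed in the half-angle tangent `d = tan(δ′/2)`,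
becomes the quadratic `−sin λ·(1+f)·d² + 2(1 − f cos λ)·d + sin λ·(f−1) = 0`, which always
has the spurious root `d = tan(λ/2)` (corresponding to the excluded case `δ′ = λ`) and, for
generic `f` (`f ≠ 0, −1, cos λ`), exactly one further root. -/
theorem delta_recovery_quadratic (δ lam f : ℝ)
    (hδ : δ ∈ Set.Ioo 0 π) (hlam : lam ∈ Set.Ioo 0 π) (hne : δ ≠ lam)
    (hf : f ≠ 0) (hf1 : f ≠ -1) (hfc : f ≠ Real.cos lam) :
    (∀ δ' ∈ Set.Ioo 0 π,
      (Real.sin δ' - Real.sin lam - f * Real.sin (δ' - lam) = 0 ↔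
        -(Real.sin lam) * (1 + f) * Real.tan (δ' / 2) ^ 2
          + 2 * (1 - f * Real.cos lam) * Real.tan (δ' / 2)
          + Real.sin lam * (f - 1) = 0)) ∧
    (-(Real.sin lam) * (1 + f) * Real.tan (lam / 2) ^ 2
        + 2 * (1 - f * Real.cos lam) * Real.tan (lam / 2)
        + Real.sin lam * (f - 1) = 0) ∧
    (∃! d : ℝ, d ≠ Real.tan (lam / 2) ∧
      -(Real.sin lam) * (1 + f) * d ^ 2 + 2 * (1 - f * Real.cos lam) * d
        + Real.sin lam * (f - 1) = 0) := by
  obtain ⟨hl0, hlπ⟩ := hlam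
  -- half-angle data for lam
  have hc0 : Real.cos (lam / 2) > 0 := by
    apply Real.cos_pos_of_mem_Ioo
    constructor <;> [linarith [Real.pi_pos]; linarith]
  have hpy0 : Real.sin (lam / 2) ^ 2 + Real.cos (lam / 2) ^ 2 = 1 :=
    Real.sin_sq_add_cos_sq _
  have hsin : Real.sin lam = 2 * Real.sin (lam / 2) * Real.cos (lam / 2) := by
    rw [← Real.sin_two_mul]; ring_nf
  have hcos : Real.cos lam = 1 - 2 * Real.sin (lam / 2) ^ 2 := by
    have h2 := Real.cos_two_mul (lam / 2)
    rw [show 2 * (lam / 2) = lam by ring] at h2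
    linarith [hpy0, h2]
  have htan : Real.tan (lam / 2) = Real.sin (lam / 2) / Real.cos (lam / 2) :=
    Real.tan_eq_sin_div_cos _
  -- the spurious root
  have spurious : -(Real.sin lam) * (1 + f) * Real.tan (lam / 2) ^ 2
        + 2 * (1 - f * Real.cos lam) * Real.tan (lam / 2)
        + Real.sin lam * (f - 1) = 0 := by
    rw [htan, hsin, hcos]
    field_simp
    linear_combination (2 * Real.sin (lam / 2) * (f - 1)) * hpy0
  -- first conjunct
  have part1 : ∀ δ' ∈ Set.Ioo 0 π,
      (Real.sin δ' - Real.sin lam - f * Real.sin (δ' - lam) = 0 ↔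
        -(Real.sin lam) * (1 + f) * Real.tan (δ' / 2) ^ 2
          + 2 * (1 - f * Real.cos lam) * Real.tan (δ' / 2)
          + Real.sin lam * (f - 1) = 0) := by
    intro δ' ⟨h0, hπ⟩
    have hc : Real.cos (δ' / 2) > 0 := by
      apply Real.cos_pos_of_mem_Ioo
      constructor <;> [linarith [Real.pi_pos]; linarith]
    have hpy : Real.sin (δ' / 2) ^ 2 + Real.cos (δ' / 2) ^ 2 = 1 :=
      Real.sin_sq_add_cos_sq _
    have hsd : Real.sin δ' = 2 * Real.sin (δ' / 2) * Real.cos (δ' / 2) := by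
      rw [← Real.sin_two_mul]; ring_nf
    have hcd : Real.cos δ' = 1 - 2 * Real.sin (δ' / 2) ^ 2 := by
      have h2 := Real.cos_two_mul (δ' / 2)
      rw [show 2 * (δ' / 2) = δ' by ring] at h2
      linarith [hpy, h2]
    have key : Real.sin δ' - Real.sin lam - f * Real.sin (δ' - lam)
        = Real.cos (δ' / 2) ^ 2 *
          (-(Real.sin lam) * (1 + f) * Real.tan (δ' / 2) ^ 2
            + 2 * (1 - f * Real.cos lam) * Real.tan (δ' / 2)
            + Real.sin lam * (f - 1)) := by
      rw [Real.sin_sub, Real.tan_eq_sin_div_cos, hsd, hcd]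
      field_simp
      linear_combination (Real.sin lam * (1 - f)) * hpy
    rw [key]
    constructor
    · intro h
      have := mul_eq_zero.mp h
      rcases this with h' | h'
      · exact absurd h' (by positivity)
      · exact h'
    · intro h; rw [h, mul_zero]
  refine ⟨part1, spurious, ?_⟩
  -- part 3
  set a : ℝ := -(Real.sin lam) * (1 + f) with ha_def
  set b : ℝ := 2 * (1 - f * Real.cos lam) with hb_def
  set c : ℝ := Real.sin lam * (f - 1) with hc_def
  set t : ℝ := Real.tan (lam / 2) with ht_def
  have hsl : Real.sin lam > 0 := Real.sin_pos_of_pos_of_lt_pi hl0 hlπ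
  have ha : a ≠ 0 := by
    rw [ha_def]
    apply mul_ne_zero
    · exact neg_ne_zero.mpr hsl.ne'
    · intro h; exact hf1 (by linarith)
  have hroot : a * t ^ 2 + b * t + c = 0 := by
    have := spurious
    linarith [this]
  have hfac : ∀ d : ℝ, a * d ^ 2 + b * d + c = (d - t) * (a * (d + t) + b) := by
    intro d; linear_combination hroot
  have hder : 2 * a * t + b = 2 * (Real.cos lam - f) := by
    simp only [ha_def, hb_def, ht_def]
    rw [Real.tan_eq_sin_div_cos, hsin, hcos]
    field_simp
    ring
  have hder0 : 2 * a * t + b ≠ 0 := by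
    rw [hder]
    intro h
    exact hfc (by linarith)
  refine ⟨-(b / a) - t, ⟨?_, ?_⟩, ?_⟩
  · intro h
    apply hder0
    have : b / a = -2 * t := by linarith
    have hb2 : b = -2 * t * a := by
      field_simp at this; linarith [this]
    rw [hb2]; ring
  · have : a * (-(b / a) - t) ^ 2 + b * (-(b / a) - t) + c = 0 := by
      rw [hfac]
      have : a * ((-(b / a) - t) + t) + b = 0 := by
        field_simp
        ring
      rw [this, mul_zero]
    linarith [this]
  · rintro d ⟨hdne, hdq⟩
    have hq : a * d ^ 2 + b * d + c = 0 := by linarith [hdq]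
    rw [hfac] at hq
    rcases mul_eq_zero.mp hq with h' | h'
    · exact absurd (by linarith : d = t) hdne
    · have : d + t = -(b / a) := by
        field_simp
        linarith [h']
      linarith [this]
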